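/- Let ε = ±1, let k_g, k_n, τ_g be real constants with k_g² − ε k_n² + ε τ_g² < 0, set θ = √(ε k_n² − ε τ_g² − k_g²), and let A = ![![0, k_g, -ε k_n], ![k_g, 0, ε τ_g], ![k_n, τ_g, 0]]. Then exp(sA) = I + A·sin(θs)/θ + A²·(1 − cos(θs))/θ². -/

import Mathlib

open Matrix

set_option maxHeartbeats 1000000 in
/-- Rodrigues-type formula: if `k_g² − ε k_n² + ε τ_g² < 0` and
`θ = √(ε k_n² − ε τ_g² − k_g²)`, then `exp(sA) = I + (sin θs / θ)A + ((1 − cos θs)/θ²)A²`. -/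
theorem stmt_8 (kg kn τg ε : ℝ) (hε : ε = 1 ∨ ε = -1)
    (hneg : kg ^ 2 - ε * kn ^ 2 + ε * τg ^ 2 < 0)
    (θ : ℝ) (hθ : θ = Real.sqrt (ε * kn ^ 2 - ε * τg ^ 2 - kg ^ 2))
    (A : Matrix (Fin 3) (Fin 3) ℝ)
    (hA : A = !![0, kg, -ε * kn; kg, 0, ε * τg; kn, τg, 0]) (s : ℝ) :
    NormedSpace.exp (s • A) =
      1 + (Real.sin (θ * s) / θ) • A + ((1 - Real.cos (θ * s)) / θ ^ 2) • (A * A) := by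
  have hθ2 : θ ^ 2 = ε * kn ^ 2 - ε * τg ^ 2 - kg ^ 2 := by
    rw [hθ]; exact Real.sq_sqrt (by linarith)
  have hθpos : 0 < θ := by rw [hθ]; exact Real.sqrt_pos.2 (by linarith)
  have hθne : θ ≠ 0 := ne_of_gt hθpos
  have hA3 : A * A * A = (-(θ ^ 2)) • A := by
    subst hA
    ext i j
    fin_cases i <;> fin_cases j <;>
      simp [Matrix.mul_apply, Fin.sum_univ_three, hθ2] <;> ring
  have hodd : ∀ k : ℕ, A ^ (2 * k + 1) = ((-(θ ^ 2)) ^ k) • A := by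
    intro k
    induction k with
    | zero => simp
    | succ n ih =>
      have h : 2 * (n + 1) + 1 = (2 * n + 1) + 2 := by ring
      rw [h, pow_add, ih, smul_mul_assoc, pow_two A, ← mul_assoc, hA3, smul_smul, ← pow_succ]
  have heven : ∀ k : ℕ, A ^ (2 * (k + 1)) = ((-(θ ^ 2)) ^ k) • (A * A) := by
    intro k
    have h : 2 * (k + 1) = (2 * k + 1) + 1 := by ring
    rw [h, pow_succ, hodd k, smul_mul_assoc]
  rw [NormedSpace.exp_eq_tsum (𝕂 := ℝ)]
  refine HasSum.tsum_eq ?_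
  set f : ℕ → Matrix (Fin 3) (Fin 3) ℝ := fun n => ((n.factorial : ℝ)⁻¹) • (s • A) ^ n with hf
  have hsum_odd : HasSum (fun k : ℕ => f (2 * k + 1)) ((Real.sin (θ * s) / θ) • A) := by
    have h1 := (Real.hasSum_sin (θ * s)).div_const θ
    have h2 : ∀ k : ℕ, (-1 : ℝ) ^ k * (θ * s) ^ (2 * k + 1) / (((2 * k + 1).factorial : ℝ)) / θ
        = (((2 * k + 1).factorial : ℝ)⁻¹ * s ^ (2 * k + 1) * (-(θ ^ 2)) ^ k) := by
      intro k
      have hn : (-(θ ^ 2)) ^ k = (-1 : ℝ) ^ k * θ ^ (2 * k) := by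
        rw [neg_pow, ← pow_mul]
      have hfac : (((2 * k + 1).factorial : ℝ)) ≠ 0 := Nat.cast_ne_zero.2 (Nat.factorial_ne_zero _)
      rw [hn]
      field_simp
      ring
    simp only [h2] at h1
    have h3 := h1.smul_const A
    refine h3.congr_fun fun k => ?_
    simp only [hf, smul_pow, hodd k, smul_smul, smul_comm]
  have hsum_even : HasSum (fun k : ℕ => f (2 * k))
      (1 + ((1 - Real.cos (θ * s)) / θ ^ 2) • (A * A)) := by
    set g : ℕ → ℝ := fun n => (-1 : ℝ) ^ n * (θ * s) ^ (2 * n) / (((2 * n).factorial : ℝ)) with hg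
    have hc : HasSum g (Real.cos (θ * s)) := Real.hasSum_cos (θ * s)
    have hshift : HasSum (fun n : ℕ => g (n + 1)) (Real.cos (θ * s) - 1) := by
      refine (hasSum_nat_add_iff 1).2 ?_
      have : (Real.cos (θ * s) - 1) + ∑ i ∈ Finset.range 1, g i = Real.cos (θ * s) := by
        simp [hg]
      rwa [this]
    have h1 := hshift.mul_left (-(θ ^ 2)⁻¹)
    have h2 : ∀ n : ℕ, (-(θ ^ 2)⁻¹) * g (n + 1)
        = (((2 * (n + 1)).factorial : ℝ)⁻¹ * s ^ (2 * (n + 1)) * (-(θ ^ 2)) ^ n) := by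
      intro n
      have hn : (-(θ ^ 2)) ^ n = (-1 : ℝ) ^ n * θ ^ (2 * n) := by
        rw [neg_pow, ← pow_mul]
      have hfac : (((2 * (n + 1)).factorial : ℝ)) ≠ 0 := Nat.cast_ne_zero.2 (Nat.factorial_ne_zero _)
      rw [hg, hn]
      field_simp
      ring
    simp only [h2] at h1
    have hval : (-(θ ^ 2)⁻¹) * (Real.cos (θ * s) - 1) = (1 - Real.cos (θ * s)) / θ ^ 2 := by
      field_simp
      ring
    rw [hval] at h1
    have h3 := h1.smul_const (A * A)
    have h4 : HasSum (fun n : ℕ => f (2 * (n + 1)))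
        (((1 - Real.cos (θ * s)) / θ ^ 2) • (A * A)) := by
      refine h3.congr_fun fun k => ?_
      simp only [hf, smul_pow, heven k, smul_smul, smul_comm]
    have h7 := HasSum.zero_add (f := fun m => f (2 * m))
      (m := ((1 - Real.cos (θ * s)) / θ ^ 2) • (A * A)) h4
    have hf0 : f 0 = 1 := by simp [hf]
    simpa [hf0] using h7
  have hmain := hsum_even.even_add_odd hsum_odd
  convert hmain using 1
  · rfl
  abel
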